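/- Let P be the edge probability matrix of an edge independent model with Vol = ∑_{i<j}P_{ij} and Ov = (∑_{i<j}P_{ij}²)/Vol. Then for any k ≥ 3, the expected number of k-cycles is at most (1/(2k))·(2·Ov·Vol)^{k/2}, and hence O(n^k · Ov^k). -/

import Mathlib

attribute [local instance] Matrix.frobeniusSeminormedAddCommGroup Matrix.frobeniusNormedRing

-- aux: cons/snoc interaction
lemma cons_snoc_castSucc {n m : ℕ} (x z : Fin n) (w : Fin m → Fin n) (j : Fin (m+1)) :
    (Fin.cons x (Fin.snoc w z) : Fin (m+2) → Fin n) j.castSucc = (Fin.cons x w : Fin (m+1) → Fin n) j := by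
  induction j using Fin.cases with
  | zero => simp
  | succ i => rw [← Fin.succ_castSucc, Fin.cons_succ, Fin.cons_succ, Fin.snoc_castSucc]

lemma pow_apply_walk {n : ℕ} (M : Matrix (Fin n) (Fin n) ℝ) :
    ∀ (m : ℕ) (x y : Fin n),
      (M ^ (m+1)) x y =
        ∑ v : Fin m → Fin n,
          (∏ i : Fin m, M ((Fin.cons x v : Fin (m+1) → Fin n) i.castSucc) (v i)) * M ((Fin.cons x v : Fin (m+1) → Fin n) (Fin.last m)) y := by
  intro m
  induction m with
  | zero =>
    intro x y
    simp [Matrix.one_mul]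
  | succ m ih =>
    intro x y
    rw [pow_succ, Matrix.mul_apply]
    simp_rw [ih]
    rw [← Equiv.sum_comp (Fin.snocEquiv (fun _ => Fin n))
      (fun v => (∏ i : Fin (m+1), M ((Fin.cons x v : Fin (m+2) → Fin n) i.castSucc) (v i)) *
        M ((Fin.cons x v : Fin (m+2) → Fin n) (Fin.last (m+1))) y)]
    rw [Fintype.sum_prod_type]
    simp only [Fin.snocEquiv_apply]
    refine Finset.sum_congr rfl fun z _ => ?_
    rw [Finset.sum_mul]
    refine Finset.sum_congr rfl fun w _ => ?_
    have he : ((Fin.snocEquiv fun _ => Fin n) (z, w)) = Fin.snoc w z := rfl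
    rw [he]
    have h1 : ∀ j : Fin (m+1), (Fin.cons x (Fin.snoc w z) : Fin (m+2) → Fin n) j.castSucc = (Fin.cons x w : Fin (m+1) → Fin n) j :=
      cons_snoc_castSucc x z w
    rw [Fin.prod_univ_castSucc]
    simp only [Fin.snoc_castSucc, Fin.snoc_last, h1]
    have h2 : (Fin.cons x (Fin.snoc w z) : Fin (m+2) → Fin n) (Fin.last (m+1)) = z := by
      rw [← Fin.succ_last, Fin.cons_succ, Fin.snoc_last]
    rw [h2]

lemma cyc_sum_eq_trace {n : ℕ} (M : Matrix (Fin n) (Fin n) ℝ) (m : ℕ) :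
    (∑ v : Fin (m+1) → Fin n, ∏ i : Fin (m+1), M (v i) (v (i+1)))
      = Matrix.trace (M ^ (m+1)) := by
  rw [Matrix.trace]
  simp only [Matrix.diag]
  simp_rw [pow_apply_walk M m]
  rw [← Equiv.sum_comp (Fin.consEquiv (fun _ => Fin n))
    (fun v => ∏ i : Fin (m+1), M (v i) (v (i+1)))]
  rw [Fintype.sum_prod_type]
  simp only [Fin.consEquiv_apply]
  refine Finset.sum_congr rfl fun x _ => ?_
  refine Finset.sum_congr rfl fun w _ => ?_
  rw [Fin.prod_univ_castSucc]
  have h1 : ∀ i : Fin m, (i.castSucc : Fin (m+1)) + 1 = i.succ := fun i => Fin.coeSucc_eq_succ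
  simp only [h1, Fin.cons_succ]
  have h2 : (Fin.last m : Fin (m+1)) + 1 = 0 := Fin.last_add_one m
  rw [h2, Fin.cons_zero]

lemma frob_norm_eq {n : ℕ} (A : Matrix (Fin n) (Fin n) ℝ) :
    ‖A‖ = Real.sqrt (∑ i, ∑ j, (A i j) ^ 2) := by
  rw [Matrix.frobenius_norm_def, Real.sqrt_eq_rpow]
  congr 1
  refine Finset.sum_congr rfl fun i _ => Finset.sum_congr rfl fun j _ => ?_
  rw [Real.norm_eq_abs, Real.rpow_two, sq_abs]

lemma trace_mul_le_frob {n : ℕ} (A B : Matrix (Fin n) (Fin n) ℝ) :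
    Matrix.trace (A * B) ≤ ‖A‖ * ‖B‖ := by
  have ht : Matrix.trace (A * B) = ∑ p : Fin n × Fin n, A p.1 p.2 * B p.2 p.1 := by
    rw [Matrix.trace, Fintype.sum_prod_type]
    refine Finset.sum_congr rfl fun i _ => ?_
    rw [Matrix.diag_apply, Matrix.mul_apply]
  have hcs := Finset.sum_mul_sq_le_sq_mul_sq Finset.univ
    (fun p : Fin n × Fin n => A p.1 p.2) (fun p : Fin n × Fin n => B p.2 p.1)
  have hA : (∑ p : Fin n × Fin n, A p.1 p.2 ^ 2) = ∑ i, ∑ j, (A i j) ^ 2 :=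
    Fintype.sum_prod_type _
  have hB : (∑ p : Fin n × Fin n, B p.2 p.1 ^ 2) = ∑ i, ∑ j, (B i j) ^ 2 := by
    rw [Fintype.sum_prod_type, Finset.sum_comm]
  rw [hA, hB] at hcs
  rw [ht, frob_norm_eq, frob_norm_eq]
  calc (∑ p : Fin n × Fin n, A p.1 p.2 * B p.2 p.1)
      ≤ |∑ p : Fin n × Fin n, A p.1 p.2 * B p.2 p.1| := le_abs_self _
    _ = Real.sqrt ((∑ p : Fin n × Fin n, A p.1 p.2 * B p.2 p.1) ^ 2) := (Real.sqrt_sq_eq_abs _).symm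
    _ ≤ Real.sqrt ((∑ i, ∑ j, (A i j) ^ 2) * (∑ i, ∑ j, (B i j) ^ 2)) := Real.sqrt_le_sqrt hcs
    _ = Real.sqrt (∑ i, ∑ j, (A i j) ^ 2) * Real.sqrt (∑ i, ∑ j, (B i j) ^ 2) :=
        Real.sqrt_mul (by positivity) _

lemma trace_pow_le_frob {n : ℕ} (M : Matrix (Fin n) (Fin n) ℝ) {k : ℕ} (hk : 2 ≤ k) :
    Matrix.trace (M ^ k) ≤ ‖M‖ ^ k := by
  obtain ⟨m, rfl⟩ : ∃ m, k = m + 2 := ⟨k - 2, by omega⟩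
  calc Matrix.trace (M ^ (m + 2)) = Matrix.trace (M ^ (m + 1) * M) := by rw [← pow_succ]
    _ ≤ ‖M ^ (m + 1)‖ * ‖M‖ := trace_mul_le_frob _ _
    _ ≤ ‖M‖ ^ (m + 1) * ‖M‖ := by
        have h := norm_pow_le' (n := m + 1) M (by omega)
        exact mul_le_mul_of_nonneg_right h (norm_nonneg _)
    _ = ‖M‖ ^ (m + 2) := by ring

open Classical in
theorem edge_independent_k_cycle_bound
    (n k : ℕ) [NeZero k] (hk : 3 ≤ k)
    (P : Fin n → Fin n → ℝ)
    (h0 : ∀ i j, 0 ≤ P i j) (h1 : ∀ i j, P i j ≤ 1)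
    (hsym : ∀ i j, P i j = P j i) (hdiag : ∀ i, P i i = 0)
    (Vol Ov : ℝ)
    (hVol : Vol = ∑ i : Fin n, ∑ j : Fin n, if i < j then P i j else 0)
    (hVolpos : 0 < Vol)
    (hOv : Ov = (∑ i : Fin n, ∑ j : Fin n, if i < j then P i j ^ 2 else 0) / Vol) :
    ((1 : ℝ) / (2 * k)) * (∑ v : Fin k → Fin n,
        if Function.Injective v then ∏ i, P (v i) (v (i + 1)) else 0) ≤
      ((1 : ℝ) / (2 * k)) * (2 * Ov * Vol) ^ ((k : ℝ) / 2) ∧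
    ((1 : ℝ) / (2 * k)) * (∑ v : Fin k → Fin n,
        if Function.Injective v then ∏ i, P (v i) (v (i + 1)) else 0) ≤
      (n : ℝ) ^ k * Ov ^ k := by
  set Q : ℝ := ∑ i : Fin n, ∑ j : Fin n, if i < j then P i j ^ 2 else 0 with hQdef
  have hQ : Q = Ov * Vol := by
    rw [hOv]; field_simp
  have hQ0 : 0 ≤ Q := by
    apply Finset.sum_nonneg; intro i _; apply Finset.sum_nonneg; intro j _
    split
    · positivity
    · exact le_refl 0
  have hOv0 : 0 ≤ Ov := by
    rw [hOv]; positivity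
  -- The matrix
  set M : Matrix (Fin n) (Fin n) ℝ := Matrix.of P with hM
  -- sum of squares
  have hsum2 : (∑ i, ∑ j, (M i j) ^ 2) = 2 * Q := by
    have key : ∀ i j : Fin n, (P i j) ^ 2 =
        (if i < j then P i j ^ 2 else 0) + (if j < i then P i j ^ 2 else 0) := by
      intro i j
      rcases lt_trichotomy i j with h | h | h
      · simp [h, not_lt_of_gt h]
      · simp [h, hdiag j]
      · simp [h, not_lt_of_gt h]
    calc (∑ i, ∑ j, (M i j) ^ 2)
        = ∑ i, ∑ j, ((if i < j then P i j ^ 2 else 0) + (if j < i then P i j ^ 2 else 0)) := by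
          refine Finset.sum_congr rfl fun i _ => Finset.sum_congr rfl fun j _ => key i j
      _ = Q + ∑ i : Fin n, ∑ j : Fin n, (if j < i then P i j ^ 2 else 0) := by
          simp_rw [Finset.sum_add_distrib]
          rfl
      _ = 2 * Q := by
          rw [Finset.sum_comm]
          have : (∑ j : Fin n, ∑ i : Fin n, if j < i then P i j ^ 2 else 0) = Q := by
            rw [hQdef]
            refine Finset.sum_congr rfl fun j _ => Finset.sum_congr rfl fun i _ => ?_
            rw [hsym]
          rw [this]; ring
  have hnorm : ‖M‖ = Real.sqrt (2 * (Ov * Vol)) := by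
    rw [frob_norm_eq, hsum2, hQ]
  have h2OV : (0:ℝ) ≤ 2 * Ov * Vol := by positivity
  -- step 1 : injective sum ≤ full sum
  obtain ⟨m, rfl⟩ : ∃ m, k = m + 3 := ⟨k - 3, by omega⟩
  have hstep1 : (∑ v : Fin (m+3) → Fin n,
      if Function.Injective v then ∏ i, P (v i) (v (i + 1)) else 0)
      ≤ ∑ v : Fin (m+3) → Fin n, ∏ i, P (v i) (v (i + 1)) := by
    refine Finset.sum_le_sum fun v _ => ?_
    split
    · exact le_refl _
    · exact Finset.prod_nonneg fun i _ => h0 _ _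
  have hstep2 : (∑ v : Fin (m+3) → Fin n, ∏ i, P (v i) (v (i + 1)))
      = Matrix.trace (M ^ (m+3)) := cyc_sum_eq_trace M (m+2)
  have hstep3 : Matrix.trace (M ^ (m+3)) ≤ ‖M‖ ^ (m+3) :=
    trace_pow_le_frob M (by omega)
  have hstep4 : ‖M‖ ^ (m+3) = (2 * Ov * Vol) ^ (((m+3 : ℕ) : ℝ) / 2) := by
    rw [hnorm, Real.sqrt_eq_rpow, ← Real.rpow_natCast _ (m+3), ← Real.rpow_mul (by positivity)]
    rw [show (2 : ℝ) * (Ov * Vol) = 2 * Ov * Vol by ring]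
    congr 1
    ring
  have hmain : (∑ v : Fin (m+3) → Fin n,
      if Function.Injective v then ∏ i, P (v i) (v (i + 1)) else 0)
      ≤ (2 * Ov * Vol) ^ (((m+3 : ℕ) : ℝ) / 2) := by
    calc _ ≤ _ := hstep1
      _ = _ := hstep2
      _ ≤ _ := hstep3
      _ = _ := hstep4
  have hfacpos : (0:ℝ) ≤ 1 / (2 * ((m+3 : ℕ) : ℝ)) := by positivity
  constructor
  · exact mul_le_mul_of_nonneg_left hmain hfacpos
  · -- second bound
    -- Vol as a filtered sum, Cauchy-Schwarz for Vol ≤ (n^2/2) Ov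
    set s : Finset (Fin n × Fin n) := Finset.univ.filter (fun p => p.1 < p.2) with hs
    have hVol' : Vol = ∑ p ∈ s, P p.1 p.2 := by
      rw [hVol, hs, Finset.sum_filter]
      exact (Fintype.sum_prod_type
        (f := fun p : Fin n × Fin n => if p.1 < p.2 then P p.1 p.2 else 0)).symm
    have hQ' : Q = ∑ p ∈ s, (P p.1 p.2) ^ 2 := by
      rw [hQdef, hs, Finset.sum_filter]
      exact (Fintype.sum_prod_type
        (f := fun p : Fin n × Fin n => if p.1 < p.2 then P p.1 p.2 ^ 2 else 0)).symm
    have hcard : 2 * (s.card : ℝ) ≤ (n : ℝ) ^ 2 := by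
      have himg : (s.image Prod.swap).card = s.card :=
        Finset.card_image_of_injective s Prod.swap_injective
      have hdisj : Disjoint s (s.image Prod.swap) := by
        rw [Finset.disjoint_left]
        intro p hp hp'
        rw [hs, Finset.mem_filter] at hp
        obtain ⟨q, hq, hqp⟩ := Finset.mem_image.mp hp'
        rw [hs, Finset.mem_filter] at hq
        rw [← hqp] at hp
        exact absurd hq.2 (not_lt_of_gt hp.2)
      have hone : (s ∪ s.image Prod.swap).card ≤ (Finset.univ : Finset (Fin n × Fin n)).card :=
        Finset.card_le_card (Finset.subset_univ _)
      rw [Finset.card_union_of_disjoint hdisj, himg, Finset.card_univ, Fintype.card_prod,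
        Fintype.card_fin] at hone
      have : 2 * s.card ≤ n * n := by omega
      calc 2 * (s.card : ℝ) = ((2 * s.card : ℕ) : ℝ) := by push_cast; ring
        _ ≤ ((n * n : ℕ) : ℝ) := by exact_mod_cast Nat.cast_le.mpr this
        _ = (n : ℝ) ^ 2 := by push_cast; ring
    have hcs := Finset.sum_mul_sq_le_sq_mul_sq s (fun _ => (1:ℝ)) (fun p => P p.1 p.2)
    simp only [one_mul, one_pow] at hcs
    rw [← hVol', ← hQ'] at hcs
    rw [Finset.sum_const, nsmul_eq_mul, mul_one] at hcs
    -- hcs : Vol ^ 2 ≤ s.card * Q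
    have h2V : 2 * Vol ≤ (n:ℝ)^2 * Ov := by
      have h1' : 2 * Vol ^ 2 ≤ (n:ℝ)^2 * Q := by nlinarith [hQ0]
      rw [hQ] at h1'
      nlinarith [hVolpos]
    have hkey : 2 * Ov * Vol ≤ ((n : ℝ) * Ov) ^ 2 := by nlinarith [hOv0]
    have hnOv : (0:ℝ) ≤ (n:ℝ) * Ov := by positivity
    have hrpow : (2 * Ov * Vol) ^ (((m+3:ℕ) : ℝ) / 2) ≤ ((n:ℝ) * Ov) ^ (m+3) := by
      calc (2 * Ov * Vol) ^ (((m+3:ℕ) : ℝ) / 2)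
          ≤ (((n:ℝ) * Ov) ^ 2) ^ (((m+3:ℕ) : ℝ) / 2) :=
            Real.rpow_le_rpow h2OV hkey (by positivity)
        _ = ((n:ℝ) * Ov) ^ (m+3) := by
            rw [← Real.rpow_natCast ((n:ℝ) * Ov) 2, ← Real.rpow_mul hnOv,
              ← Real.rpow_natCast ((n:ℝ) * Ov) (m+3)]
            congr 1
            push_cast
            ring
    refine le_trans (mul_le_mul_of_nonneg_left (le_trans hmain hrpow) hfacpos) ?_
    have hcoef : (1:ℝ) / (2 * ((m+3:ℕ):ℝ)) ≤ 1 := by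
      rw [div_le_one (by positivity)]
      push_cast
      linarith
    calc (1:ℝ) / (2 * ((m+3:ℕ):ℝ)) * ((n:ℝ) * Ov) ^ (m+3)
        ≤ 1 * ((n:ℝ) * Ov) ^ (m+3) := mul_le_mul_of_nonneg_right hcoef (by positivity)
      _ = (n : ℝ) ^ (m+3) * Ov ^ (m+3) := by rw [one_mul, mul_pow]
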